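/- Under the fairness assumption and the winner-determination rule of Causal-PIBT, when several requesting agents contest the same unoccupied node, exactly one agent (the one with maximal temporal priority among them, which is unique since ties are broken by unique original priorities within distinct trees) becomes extended toward that node and all other contestants revert to contracted; hence at most one agent can ever be extended toward a given node at a time. -/
import Mathlib


inductive Mode where
  | contracted | requesting | extended
deriving DecidableEq

structure Config (A V P : Type*) where
  mode : A → Mode
  tail : A → V
  head : A → Option V
  ptmp : A → P

def occupied {A V P : Type*} (c : Config A V P) (v : V) : Prop :=
  (∃ j, c.tail j = v) ∨ (∃ j, c.mode j = Mode.extended ∧ c.head j = some v)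

/-- Transitions of the time-independent model with Causal-PIBT winner
determination: when several requesting agents contest the same unoccupied node
`v`, the unique contestant with maximal temporal priority becomes extended
toward `v` and all other contestants revert to contracted, atomically. -/
inductive Step {A V P : Type*} [LinearOrder P] :
    Config A V P → Config A V P → Prop
  | toRequesting (c c' : Config A V P) (i : A) (u : V) :
      c.mode i = Mode.contracted →
      c'.mode i = Mode.requesting → c'.head i = some u → c'.tail i = c.tail i →
      (∀ j, j ≠ i → c'.mode j = c.mode j ∧ c'.tail j = c.tail j ∧ c'.head j = c.head j) →
      Step c c'
  | backToContracted (c c' : Config A V P) (i : A) :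
      c.mode i = Mode.requesting →
      c'.mode i = Mode.contracted → c'.head i = none → c'.tail i = c.tail i →
      (∀ j, j ≠ i → c'.mode j = c.mode j ∧ c'.tail j = c.tail j ∧ c'.head j = c.head j) →
      Step c c'
  | winner (c c' : Config A V P) (i : A) (v : V) :
      c.mode i = Mode.requesting → c.head i = some v → ¬ occupied c v →
      -- `i` has the strictly maximal temporal priority among the contestants
      (∀ j, j ≠ i → c.mode j = Mode.requesting → c.head j = some v →
        c.ptmp j < c.ptmp i) →
      -- `i` wins and becomes extended
      c'.mode i = Mode.extended → c'.head i = some v → c'.tail i = c.tail i →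
      -- all losing contestants revert to contracted, atomically
      (∀ j, j ≠ i → c.mode j = Mode.requesting → c.head j = some v →
        c'.mode j = Mode.contracted ∧ c'.head j = none ∧ c'.tail j = c.tail j) →
      -- every other agent is unchanged
      (∀ j, j ≠ i → ¬ (c.mode j = Mode.requesting ∧ c.head j = some v) →
        c'.mode j = c.mode j ∧ c'.tail j = c.tail j ∧ c'.head j = c.head j) →
      Step c c'
  | finishMove (c c' : Config A V P) (i : A) (u : V) :
      c.mode i = Mode.extended → c.head i = some u →
      c'.mode i = Mode.contracted → c'.head i = none → c'.tail i = u →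
      (∀ j, j ≠ i → c'.mode j = c.mode j ∧ c'.tail j = c.tail j ∧ c'.head j = c.head j) →
      Step c c'

/-- Under the winner-determination rule of Causal-PIBT, starting from a
configuration in which all agents are contracted, in every reachable
configuration at most one agent is extended toward any given node. -/
theorem causalPIBT_at_most_one_extended_per_node
    {A V P : Type*} [LinearOrder P] (c₀ : Config A V P)
    (hmode₀ : ∀ i, c₀.mode i = Mode.contracted)
    (c : Config A V P)
    (hreach : Relation.ReflTransGen (Step (A := A) (V := V) (P := P)) c₀ c) :
    ∀ (v : V) (i j : A), c.mode i = Mode.extended → c.mode j = Mode.extended →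
      c.head i = some v → c.head j = some v → i = j := by
  induction hreach with
  | refl =>
    intro v i j hi _ _ _
    rw [hmode₀ i] at hi; cases hi
  | tail _ hstep ih =>
    rename_i b c' _
    intro v i j hi hj hhi hhj
    cases hstep with
    | toRequesting k u hk hk1 hk2 hk3 hrest =>
      have pres : ∀ a, c'.mode a = Mode.extended → c'.head a = some v →
          b.mode a = Mode.extended ∧ b.head a = some v := by
        intro a ha hha
        by_cases hak : a = k
        · subst hak; rw [hk1] at ha; cases ha
        · obtain ⟨h1, _, h3⟩ := hrest a hak
          exact ⟨h1 ▸ ha, h3 ▸ hha⟩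
      obtain ⟨hi', hhi'⟩ := pres i hi hhi
      obtain ⟨hj', hhj'⟩ := pres j hj hhj
      exact ih v i j hi' hj' hhi' hhj'
    | backToContracted k hk hk1 hk2 hk3 hrest =>
      have pres : ∀ a, c'.mode a = Mode.extended → c'.head a = some v →
          b.mode a = Mode.extended ∧ b.head a = some v := by
        intro a ha hha
        by_cases hak : a = k
        · subst hak; rw [hk1] at ha; cases ha
        · obtain ⟨h1, _, h3⟩ := hrest a hak
          exact ⟨h1 ▸ ha, h3 ▸ hha⟩
      obtain ⟨hi', hhi'⟩ := pres i hi hhi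
      obtain ⟨hj', hhj'⟩ := pres j hj hhj
      exact ih v i j hi' hj' hhi' hhj'
    | finishMove k u hk hk0 hk1 hk2 hk3 hrest =>
      have pres : ∀ a, c'.mode a = Mode.extended → c'.head a = some v →
          b.mode a = Mode.extended ∧ b.head a = some v := by
        intro a ha hha
        by_cases hak : a = k
        · subst hak; rw [hk1] at ha; cases ha
        · obtain ⟨h1, _, h3⟩ := hrest a hak
          exact ⟨h1 ▸ ha, h3 ▸ hha⟩
      obtain ⟨hi', hhi'⟩ := pres i hi hhi
      obtain ⟨hj', hhj'⟩ := pres j hj hhj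
      exact ih v i j hi' hj' hhi' hhj'
    | winner k v0 hk hkh hnocc hmax hk1 hk2 hk3 hlose hrest =>
      have pres : ∀ a, a ≠ k → c'.mode a = Mode.extended → c'.head a = some v →
          b.mode a = Mode.extended ∧ b.head a = some v := by
        intro a hak ha hha
        by_cases hc : b.mode a = Mode.requesting ∧ b.head a = some v0
        · obtain ⟨h1, _, _⟩ := hlose a hak hc.1 hc.2
          rw [h1] at ha; cases ha
        · obtain ⟨h1, _, h3⟩ := hrest a hak hc
          exact ⟨h1 ▸ ha, h3 ▸ hha⟩
      by_cases hik : i = k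
      · by_cases hjk : j = k
        · rw [hik, hjk]
        · exfalso
          obtain ⟨hj', hhj'⟩ := pres j hjk hj hhj
          have hv : v = v0 := by
            rw [hik] at hhi; rw [hk2] at hhi
            exact (Option.some.injEq _ _ ▸ hhi).symm
          exact hnocc (Or.inr ⟨j, hj', hv ▸ hhj'⟩)
      · by_cases hjk : j = k
        · exfalso
          obtain ⟨hi', hhi'⟩ := pres i hik hi hhi
          have hv : v = v0 := by
            rw [hjk] at hhj; rw [hk2] at hhj
            exact (Option.some.injEq _ _ ▸ hhj).symm
          exact hnocc (Or.inr ⟨i, hi', hv ▸ hhi'⟩)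
        · obtain ⟨hi', hhi'⟩ := pres i hik hi hhi
          obtain ⟨hj', hhj'⟩ := pres j hjk hj hhj
          exact ih v i j hi' hj' hhi' hhj'
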